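/- For all positive integers a and D, all rationals μ and ν, and every z = x + iy ∈ ℂ with y > 0: ∑_{r=0}^{D−1} (√(2ay)/√D) · θ[aμ + ar/D; ν](Dz/a) · θ[μ + r/D; −aν](−aD·conj(z)) = ∑_{(m,n)∈ℤ×ℤ} e^{2πi(mν + nDμ)} · e^{π(mni − |n−mz|²/(2y))·(D/a)}, where conj(z) = x − iy. -/

import Mathlib

open Complex

/-- The weight-1/2 theta function with characteristics `μ, ν ∈ ℚ`:
`θ[μ; ν](w) = ∑_{n ∈ ℤ+μ} exp(πin²w + 2πiνn)`. -/
noncomputable def thetaChar (μ ν : ℚ) (w : ℂ) : ℂ :=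
  ∑' n : ℤ, Complex.exp (Real.pi * Complex.I * ((n : ℂ) + (μ : ℂ)) ^ 2 * w
    + 2 * Real.pi * Complex.I * (ν : ℂ) * ((n : ℂ) + (μ : ℂ)))


lemma gauss_summable (δ : ℝ) (hδ : 0 < δ) : Summable (fun n : ℤ => Real.exp (-δ * (n:ℝ)^2)) := by
  have h : Summable (fun n : ℤ => ‖jacobiTheta₂_term n 0 ((δ/Real.pi) * I)‖) := by
    refine ((summable_jacobiTheta₂_term_iff 0 _).mpr ?_).norm
    simp [Real.pi_pos, div_pos hδ Real.pi_pos]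
  refine h.congr fun n => ?_
  rw [norm_jacobiTheta₂_term]
  congr 1
  simp
  field_simp

set_option maxHeartbeats 1000000 in
lemma master_summable (c : ℝ) (hc : 0 < c) (w : ℂ) (hw : w.im ≠ 0) :
    Summable (fun p : ℤ × ℤ => Real.exp (-c * Complex.normSq ((p.2:ℂ) - (p.1:ℂ) * w))) := by
  set u := w.re with hu; set v := w.im with hv
  have hv2 : 0 < v^2 := by positivity
  have hS : 0 < u^2 + v^2 := by positivity
  set ε : ℝ := min (v^2/(2*(u^2+v^2))) (v^4/(u^2+v^2)) with hε
  have hεpos : 0 < ε := lt_min (by positivity) (by positivity)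
  have key : ∀ M N : ℝ, ε * M^2 + ε * N^2 ≤ (N - M*u)^2 + M^2*v^2 := by
    intro M N
    have K : v^2*N^2/2 + M^2*v^4 ≤ (u^2+v^2)*((N-M*u)^2 + M^2*v^2) := by
      nlinarith [mul_nonneg (sq_nonneg u) (sq_nonneg (N-M*u)),
        mul_nonneg (sq_nonneg v) (sq_nonneg (N-2*M*u))]
    have h1 : ε * N^2 ≤ v^2/(2*(u^2+v^2)) * N^2 :=
      mul_le_mul_of_nonneg_right (min_le_left _ _) (sq_nonneg N)
    have h2 : ε * M^2 ≤ v^4/(u^2+v^2) * M^2 :=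
      mul_le_mul_of_nonneg_right (min_le_right _ _) (sq_nonneg M)
    have e : v^2/(2*(u^2+v^2)) * N^2 + v^4/(u^2+v^2) * M^2 = (v^2*N^2/2 + M^2*v^4)/(u^2+v^2) := by
      field_simp
    have h3 : v^2/(2*(u^2+v^2)) * N^2 + v^4/(u^2+v^2) * M^2 ≤ (N-M*u)^2 + M^2*v^2 := by
      rw [e, div_le_iff₀ hS]; nlinarith [K]
    linarith
  have hmaj : Summable (fun p : ℤ × ℤ =>
      Real.exp (-(c*ε) * (p.1:ℝ)^2) * Real.exp (-(c*ε) * (p.2:ℝ)^2)) :=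
    (gauss_summable _ (by positivity)).mul_of_nonneg (gauss_summable _ (by positivity))
      (fun n => (Real.exp_pos _).le) (fun n => (Real.exp_pos _).le)
  refine hmaj.of_nonneg_of_le (fun p => (Real.exp_pos _).le) (fun p => ?_)
  rw [← Real.exp_add]
  apply Real.exp_le_exp.mpr
  have hns : Complex.normSq ((p.2:ℂ) - (p.1:ℂ) * w) = ((p.2:ℝ) - (p.1:ℝ)*u)^2 + ((p.1:ℝ))^2*v^2 := by
    simp [Complex.normSq_apply, hu, hv]
    ring
  rw [hns]
  have := key (p.1:ℝ) (p.2:ℝ)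
  nlinarith [this, mul_le_mul_of_nonneg_left this hc.le]

lemma geom_exp_sum (D : ℕ) (hD : 0 < D) (n : ℤ) :
    ∑ r ∈ Finset.range D, Complex.exp (2*Real.pi*I*(n:ℂ)*(r:ℂ)/(D:ℂ)) =
      if (D:ℤ) ∣ n then (D:ℂ) else 0 := by
  have hDC : (D:ℂ) ≠ 0 := Nat.cast_ne_zero.mpr hD.ne'
  set ζ : ℂ := Complex.exp (2*Real.pi*I*(n:ℂ)/(D:ℂ)) with hζ
  have hpow : ∀ r : ℕ, Complex.exp (2*Real.pi*I*(n:ℂ)*(r:ℂ)/(D:ℂ)) = ζ^r := by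
    intro r
    rw [hζ, ← Complex.exp_nat_mul]
    congr 1; ring
  simp_rw [hpow]
  by_cases h : (D:ℤ) ∣ n
  · have hζ1 : ζ = 1 := by
      obtain ⟨k, hk⟩ := h
      rw [hζ, Complex.exp_eq_one_iff]
      exact ⟨k, by rw [hk]; push_cast; field_simp⟩
    simp [hζ1, h]
  · have hζ1 : ζ ≠ 1 := by
      intro hc
      rw [hζ, Complex.exp_eq_one_iff] at hc
      obtain ⟨k, hk⟩ := hc
      apply h
      refine ⟨k, ?_⟩
      have hπ : (2*Real.pi*I : ℂ) ≠ 0 := by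
        simp [Real.pi_ne_zero, Complex.I_ne_zero]
      have h2 : (2*Real.pi*I:ℂ) * (n:ℂ) = (2*Real.pi*I:ℂ) * ((D:ℂ)*(k:ℂ)) := by
        field_simp at hk
        linear_combination (2*Real.pi*I:ℂ) * hk
      have h3 := mul_left_cancel₀ hπ h2
      exact_mod_cast h3
    rw [geom_sum_eq hζ1]
    have hζD : ζ^D = 1 := by
      rw [hζ, ← Complex.exp_nat_mul]
      have : (D:ℂ) * (2*Real.pi*I*(n:ℂ)/(D:ℂ)) = (n:ℤ) * (2*Real.pi*I) := by
        field_simp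
      rw [this, Complex.exp_int_mul_two_pi_mul_I]
    rw [hζD]
    simp [h]

lemma thetaChar_eq (μ ν : ℚ) (w : ℂ) : thetaChar μ ν w =
    Complex.exp (Real.pi * I * (μ:ℂ)^2 * w + 2*Real.pi*I*(ν:ℂ)*(μ:ℂ)) *
      jacobiTheta₂ ((μ:ℂ)*w + (ν:ℂ)) w := by
  rw [thetaChar, jacobiTheta₂, ← tsum_mul_left]
  refine tsum_congr fun n => ?_
  rw [jacobiTheta₂_term, ← Complex.exp_add]
  congr 1
  ring

/-- The intermediate lattice function. -/
noncomputable def Wf (a D : ℕ) (μ ν : ℚ) (z : ℂ) (p : ℤ × ℤ) : ℂ :=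
  Complex.exp (2*Real.pi*I*((p.1:ℂ)*(ν:ℂ) + (p.2:ℂ)*(μ:ℂ))) *
    Complex.exp ((Real.pi:ℂ) * ((p.1:ℂ)*(p.2:ℂ)*I
      - (Complex.normSq ((p.2:ℂ)/(D:ℂ) - (p.1:ℂ)*z) : ℂ)*(D:ℂ)/(2*(z.im:ℂ))) * (1/(a:ℂ)))

-- id1
lemma id1 (a D : ℕ) (r : ℕ) (m k : ℤ) (μ ν : ℚ) (z : ℂ) (y : ℝ)
    (ha : (a:ℂ) ≠ 0) (hD : (D:ℂ) ≠ 0) :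
    jacobiTheta₂_term (m + a*k) ((((a:ℚ)*(μ + (r:ℚ)/(D:ℚ)) : ℚ):ℂ) * ((D:ℂ)*z/(a:ℂ)) + (ν:ℂ)) ((D:ℂ)*z/(a:ℂ)) *
    jacobiTheta₂_term k ((((μ + (r:ℚ)/(D:ℚ)) : ℚ):ℂ) * (-(a:ℂ)*(D:ℂ)*(z - 2*(y:ℝ)*I)) + ((-(a:ℚ)*ν : ℚ):ℂ)) (-(a:ℂ)*(D:ℂ)*(z - 2*(y:ℝ)*I))
    = Complex.exp (Real.pi*I*(m:ℂ)^2*((D:ℂ)*z/(a:ℂ)) + 2*Real.pi*I*(m:ℂ)*((((a:ℚ)*(μ + (r:ℚ)/(D:ℚ)) : ℚ):ℂ) * ((D:ℂ)*z/(a:ℂ)) + (ν:ℂ))) *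
      Complex.exp (-(Real.pi:ℂ)*((2*(a:ℝ)*(D:ℝ)*y :ℝ):ℂ)*(k:ℂ)^2
        + 2*(Real.pi:ℂ)*(I*(m:ℂ)*(D:ℂ)*z - 2*(a:ℂ)*(D:ℂ)*((μ:ℂ) + (r:ℂ)/(D:ℂ))*(y:ℂ))*(k:ℂ)) := by
  rw [jacobiTheta₂_term, jacobiTheta₂_term, ← Complex.exp_add, ← Complex.exp_add]
  congr 1
  push_cast
  have hI3 : I^3 = -I := by rw [pow_succ, I_sq]; ring
  have hI4 : I^4 = 1 := by rw [show (4:ℕ) = 2+2 from rfl, pow_add, I_sq]; ring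
  field_simp
  ring_nf
  simp only [I_sq, hI3, hI4]
  ring_nf


set_option maxHeartbeats 1000000 in
lemma id2 (a D : ℕ) (r : ℕ) (m n : ℤ) (μ ν : ℚ) (z : ℂ) (y : ℝ)
    (ha : (a:ℂ) ≠ 0) (hD : (D:ℂ) ≠ 0) (hy : (y:ℂ) ≠ 0)
    (hn : (Complex.normSq ((n:ℂ)/(D:ℂ) - (m:ℂ)*z) : ℂ)
        = ((n:ℂ)/(D:ℂ) - (m:ℂ)*z) * ((n:ℂ)/(D:ℂ) - (m:ℂ)*(z - 2*(y:ℝ)*I))) :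
    Complex.exp (Real.pi*I*((((a:ℚ)*(μ + (r:ℚ)/(D:ℚ)):ℚ)):ℂ)^2*((D:ℂ)*z/(a:ℂ)) + 2*Real.pi*I*(ν:ℂ)*((((a:ℚ)*(μ + (r:ℚ)/(D:ℚ)):ℚ)):ℂ)) *
    Complex.exp (Real.pi*I*(((μ + (r:ℚ)/(D:ℚ):ℚ)):ℂ)^2*(-(a:ℂ)*(D:ℂ)*(z - 2*(y:ℝ)*I)) + 2*Real.pi*I*(((-(a:ℚ)*ν:ℚ)):ℂ)*(((μ + (r:ℚ)/(D:ℚ):ℚ)):ℂ)) *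
    Complex.exp (Real.pi*I*(m:ℂ)^2*((D:ℂ)*z/(a:ℂ)) + 2*Real.pi*I*(m:ℂ)*((((a:ℚ)*(μ + (r:ℚ)/(D:ℚ)) : ℚ):ℂ) * ((D:ℂ)*z/(a:ℂ)) + (ν:ℂ))) *
    Complex.exp (-(Real.pi:ℂ)/(((2*(a:ℝ)*(D:ℝ)*y :ℝ)):ℂ) * ((n:ℂ) + I*(I*(m:ℂ)*(D:ℂ)*z - 2*(a:ℂ)*(D:ℂ)*((μ:ℂ) + (r:ℂ)/(D:ℂ))*(y:ℂ)))^2)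
    = Complex.exp (2*Real.pi*I*(n:ℂ)*(r:ℂ)/(D:ℂ)) *
      (Complex.exp (2*Real.pi*I*((m:ℂ)*(ν:ℂ) + (n:ℂ)*(μ:ℂ))) *
       Complex.exp ((Real.pi:ℂ) * ((m:ℂ)*(n:ℂ)*I - (Complex.normSq ((n:ℂ)/(D:ℂ) - (m:ℂ)*z):ℂ)*(D:ℂ)/(2*(y:ℂ))) * (1/(a:ℂ)))) := by
  rw [hn, ← Complex.exp_add, ← Complex.exp_add, ← Complex.exp_add, ← Complex.exp_add, ← Complex.exp_add]
  congr 1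
  push_cast
  have hI3 : I^3 = -I := by rw [pow_succ, I_sq]; ring
  have hI4 : I^4 = 1 := by rw [show (4:ℕ) = 2+2 from rfl, pow_add, I_sq]; ring
  field_simp [ha, hD, hy]
  ring_nf
  simp only [I_sq, hI3, hI4]
  ring_nf


lemma pref (a D : ℕ) (ha : 0 < a) (hD : 0 < D) (y : ℝ) (hy : 0 < y) :
    ((Real.sqrt (2*a*y)/Real.sqrt D : ℝ):ℂ) * (1/((2*(a:ℝ)*(D:ℝ)*y:ℝ):ℂ)^(1/2 : ℂ)) = 1/(D:ℂ) := by
  have haR : (0:ℝ) < a := by exact_mod_cast ha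
  have hDR : (0:ℝ) < D := by exact_mod_cast hD
  have h0 : (0:ℝ) ≤ 2*(a:ℝ)*(D:ℝ)*y := by positivity
  have hcp : ((2*(a:ℝ)*(D:ℝ)*y:ℝ):ℂ)^(1/2 : ℂ) = ((Real.sqrt (2*(a:ℝ)*(D:ℝ)*y) : ℝ):ℂ) := by
    rw [Real.sqrt_eq_rpow, Complex.ofReal_cpow h0]
    norm_num
  rw [hcp]
  have hreal : (Real.sqrt (2*(a:ℝ)*y) / Real.sqrt (D:ℝ)) * (1/Real.sqrt (2*(a:ℝ)*(D:ℝ)*y)) = 1/(D:ℝ) := by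
    rw [show (2*(a:ℝ)*(D:ℝ)*y) = (2*(a:ℝ)*y)*(D:ℝ) by ring, Real.sqrt_mul (by positivity : (0:ℝ) ≤ 2*(a:ℝ)*y) (D:ℝ)]
    have h1 : Real.sqrt (2*(a:ℝ)*y) ≠ 0 := by positivity
    have h2 : Real.sqrt (D:ℝ) ≠ 0 := by positivity
    rw [div_mul_div_comm, mul_one, mul_left_comm, ← div_div, div_self h1, Real.mul_self_sqrt hDR.le]
  calc ((Real.sqrt (2*a*y)/Real.sqrt D : ℝ):ℂ) * (1/((Real.sqrt (2*(a:ℝ)*(D:ℝ)*y):ℝ):ℂ))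
      = (((Real.sqrt (2*(a:ℝ)*y)/Real.sqrt (D:ℝ)) * (1/Real.sqrt (2*(a:ℝ)*(D:ℝ)*y)) : ℝ) : ℂ) := by
        push_cast; ring
    _ = (((1:ℝ)/(D:ℝ) : ℝ) : ℂ) := by rw [hreal]
    _ = 1/(D:ℂ) := by push_cast; ring

lemma norm_Wf (a D : ℕ) (μ ν : ℚ) (z : ℂ) (ha : 0 < a) (hD : 0 < D) (hz : 0 < z.im) (p : ℤ × ℤ) :
    ‖Wf a D μ ν z p‖
    = Real.exp (-(Real.pi/(2*a*D*z.im)) * Complex.normSq ((p.2:ℂ) - (p.1:ℂ)*((D:ℂ)*z))) := by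
  rw [Wf]
  obtain ⟨m, n⟩ := p
  have haR : (0:ℝ) < a := by exact_mod_cast ha
  have hDR : (0:ℝ) < D := by exact_mod_cast hD
  have hDC : (D:ℂ) ≠ 0 := Nat.cast_ne_zero.mpr hD.ne'
  have haC : (a:ℂ) ≠ 0 := Nat.cast_ne_zero.mpr ha.ne'
  have hyC : ((z.im:ℝ):ℂ) ≠ 0 := by
    simpa using hz.ne'
  set c : ℝ := Complex.normSq ((n:ℂ)/(D:ℂ) - (m:ℂ)*z) with hc
  have hsc : Complex.normSq ((n:ℂ) - (m:ℂ)*((D:ℂ)*z)) = (D:ℝ)^2 * c := by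
    rw [hc, show ((n:ℂ) - (m:ℂ)*((D:ℂ)*z)) = (D:ℂ) * ((n:ℂ)/(D:ℂ) - (m:ℂ)*z) by
        field_simp, map_mul]
    rw [show ((D:ℂ)) = ((D:ℝ):ℂ) by push_cast; ring, Complex.normSq_ofReal]
    ring
  rw [norm_mul, Complex.norm_exp, Complex.norm_exp,
    ← Real.exp_add, hsc]
  congr 1
  have h1 : (2*(Real.pi:ℂ)*I*((m:ℂ)*(ν:ℂ) + (n:ℂ)*(μ:ℂ))).re = 0 := by
    rw [show 2*(Real.pi:ℂ)*I*((m:ℂ)*(ν:ℂ) + (n:ℂ)*(μ:ℂ))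
        = ((2*Real.pi*((m:ℝ)*(ν:ℝ) + (n:ℝ)*(μ:ℝ)) : ℝ):ℂ) * I by push_cast; ring,
      Complex.mul_I_re]
    simp
  have h2 : ((Real.pi:ℂ) * ((m:ℂ)*(n:ℂ)*I - (c:ℂ)*(D:ℂ)/(2*(z.im:ℂ))) * (1/(a:ℂ))).re
      = -(Real.pi*c*(D:ℝ)/(2*z.im*(a:ℝ))) := by
    rw [show (Real.pi:ℂ) * ((m:ℂ)*(n:ℂ)*I - (c:ℂ)*(D:ℂ)/(2*(z.im:ℂ))) * (1/(a:ℂ))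
        = ((-(Real.pi*c*(D:ℝ)/(2*z.im*(a:ℝ))) : ℝ):ℂ) + ((Real.pi*(m:ℝ)*(n:ℝ)/(a:ℝ) : ℝ):ℂ)*I by
          push_cast; field_simp; ring]
    rw [Complex.add_re, Complex.mul_I_re, Complex.ofReal_re, Complex.ofReal_im]
    ring
  rw [h1, h2]
  field_simp
  ring


lemma summable_normWf (a D : ℕ) (μ ν : ℚ) (z : ℂ) (ha : 0 < a) (hD : 0 < D) (hz : 0 < z.im) :
    Summable (fun p : ℤ × ℤ => ‖Wf a D μ ν z p‖) := by
  have haR : (0:ℝ) < a := by exact_mod_cast ha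
  have hDR : (0:ℝ) < D := by exact_mod_cast hD
  have hWim : ((D:ℂ)*z).im ≠ 0 := by
    rw [show (D:ℂ)*z = (((D:ℝ)):ℂ)*z by push_cast; ring, Complex.mul_im]
    simp only [Complex.ofReal_re, Complex.ofReal_im]
    have : (0:ℝ) < (D:ℝ)*z.im := by positivity
    nlinarith
  refine (master_summable (Real.pi/(2*a*D*z.im)) (by positivity) ((D:ℂ)*z) hWim).congr fun p => ?_
  exact (norm_Wf a D μ ν z ha hD hz p).symm

lemma summable_V (a D : ℕ) (μ ν : ℚ) (z : ℂ) (ha : 0 < a) (hD : 0 < D) (hz : 0 < z.im) (r : ℕ) :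
    Summable (fun p : ℤ × ℤ =>
      Complex.exp (2*Real.pi*I*(p.2:ℂ)*(r:ℂ)/(D:ℂ)) * Wf a D μ ν z p / (D:ℂ)) := by
  apply Summable.of_norm
  refine ((summable_normWf a D μ ν z ha hD hz).div_const (D:ℝ)).congr fun p => ?_
  have hph : ‖Complex.exp (2*Real.pi*I*(p.2:ℂ)*(r:ℂ)/(D:ℂ))‖ = 1 := by
    rw [show (2*Real.pi*I*(p.2:ℂ)*(r:ℂ)/(D:ℂ)) = ((2*Real.pi*(p.2:ℝ)*(r:ℝ)/(D:ℝ) : ℝ):ℂ)*I by push_cast; ring,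
      Complex.norm_exp, Complex.mul_I_re, Complex.ofReal_im]
    simp
  rw [norm_div, norm_mul, hph, one_mul, Complex.norm_natCast]

set_option maxHeartbeats 1600000 in
lemma step_r (a D : ℕ) (ha : 0 < a) (hD : 0 < D) (μ ν : ℚ) (z : ℂ) (hz : 0 < z.im) (r : ℕ) :
    ((Real.sqrt (2 * a * z.im) / Real.sqrt D : ℝ) : ℂ) *
        thetaChar ((a : ℚ) * μ + (a : ℚ) * (r : ℚ) / (D : ℚ)) ν ((D : ℂ) * z / (a : ℂ)) *
        thetaChar (μ + (r : ℚ) / (D : ℚ)) (-(a : ℚ) * ν) (-(a : ℂ) * (D : ℂ) * (starRingEnd ℂ) z)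
      = ∑' p : ℤ × ℤ,
          Complex.exp (2*Real.pi*I*(p.2:ℂ)*(r:ℂ)/(D:ℂ)) * Wf a D μ ν z p / (D:ℂ) := by
  have haR : (0:ℝ) < a := by exact_mod_cast ha
  have hDR : (0:ℝ) < D := by exact_mod_cast hD
  have haC : (a:ℂ) ≠ 0 := Nat.cast_ne_zero.mpr ha.ne'
  have hDC : (D:ℂ) ≠ 0 := Nat.cast_ne_zero.mpr hD.ne'
  have hyC : ((z.im:ℝ):ℂ) ≠ 0 := by simpa using hz.ne'
  have hconj : (starRingEnd ℂ) z = z - 2*(z.im:ℝ)*I := by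
    apply Complex.ext <;> simp <;> ring
  have hchar : (a:ℚ)*μ + (a:ℚ)*(r:ℚ)/(D:ℚ) = (a:ℚ)*(μ + (r:ℚ)/(D:ℚ)) := by ring
  -- abbreviations
  set τ₁ : ℂ := (D:ℂ)*z/(a:ℂ) with hτ₁def
  set τ₂ : ℂ := -(a:ℂ)*(D:ℂ)*(z - 2*(z.im:ℝ)*I) with hτ₂def
  set z₁ : ℂ := (((a:ℚ)*(μ + (r:ℚ)/(D:ℚ)) : ℚ):ℂ) * τ₁ + (ν:ℂ) with hz₁def
  set z₂ : ℂ := (((μ + (r:ℚ)/(D:ℚ)) : ℚ):ℂ) * τ₂ + ((-(a:ℚ)*ν : ℚ):ℂ) with hz₂def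
  have hτ₁im : 0 < τ₁.im := by
    rw [hτ₁def, show (D:ℂ)*z/(a:ℂ) = (((D:ℝ)/(a:ℝ) : ℝ):ℂ)*z by push_cast; ring]
    rw [Complex.mul_im]
    simp only [Complex.ofReal_re, Complex.ofReal_im]
    have : (0:ℝ) < (D:ℝ)/(a:ℝ) := by positivity
    nlinarith
  have hτ₂im : 0 < τ₂.im := by
    have him : (z - 2*(z.im:ℝ)*I).im = -z.im := by simp; ring
    rw [hτ₂def, show -(a:ℂ)*(D:ℂ)*(z - 2*(z.im:ℝ)*I) = ((-(a*D:ℝ) : ℝ):ℂ)*(z - 2*(z.im:ℝ)*I) by push_cast; ring,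
      Complex.mul_im, him]
    simp only [Complex.ofReal_re, Complex.ofReal_im, zero_mul, add_zero]
    have : (0:ℝ) < a*D*z.im := by positivity
    nlinarith
  have hs₁ : Summable fun n : ℤ => ‖jacobiTheta₂_term n z₁ τ₁‖ :=
    ((summable_jacobiTheta₂_term_iff z₁ τ₁).mpr hτ₁im).norm
  have hs₂ : Summable fun n : ℤ => ‖jacobiTheta₂_term n z₂ τ₂‖ :=
    ((summable_jacobiTheta₂_term_iff z₂ τ₂).mpr hτ₂im).norm
  have hF : Summable (fun q : ℤ × ℤ => jacobiTheta₂_term q.1 z₁ τ₁ * jacobiTheta₂_term q.2 z₂ τ₂) :=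
    (hs₁.mul_norm hs₂).of_norm
  -- the shear equivalence
  let e : ℤ × ℤ ≃ ℤ × ℤ :=
    ⟨fun p => (p.1 + a*p.2, p.2), fun p => (p.1 - a*p.2, p.2),
     fun p => by simp, fun p => by simp⟩
  have hFe : Summable (fun q : ℤ × ℤ => jacobiTheta₂_term (q.1 + a*q.2) z₁ τ₁ * jacobiTheta₂_term q.2 z₂ τ₂) :=
    (e.summable_iff (f := fun q : ℤ × ℤ => jacobiTheta₂_term q.1 z₁ τ₁ * jacobiTheta₂_term q.2 z₂ τ₂)).mpr hF
  -- norm of Wf summable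
  have hV : Summable (fun p : ℤ × ℤ => Complex.exp (2*Real.pi*I*(p.2:ℂ)*(r:ℂ)/(D:ℂ)) * Wf a D μ ν z p / (D:ℂ)) :=
    summable_V a D μ ν z ha hD hz r
  -- quadratic exponent data
  set α : ℂ := ((2*(a:ℝ)*(D:ℝ)*z.im :ℝ):ℂ) with hαdef
  have hαre : 0 < α.re := by
    rw [hαdef]
    simp only [Complex.ofReal_re]
    positivity
  have hn_prf : ∀ m n : ℤ, (Complex.normSq ((n:ℂ)/(D:ℂ) - (m:ℂ)*z) : ℂ)
      = ((n:ℂ)/(D:ℂ) - (m:ℂ)*z) * ((n:ℂ)/(D:ℂ) - (m:ℂ)*(z - 2*(z.im:ℝ)*I)) := by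
    intro m n
    rw [← Complex.mul_conj]
    congr 1
    rw [map_sub, map_div₀, map_mul, ← hconj]
    simp
  -- main calc
  rw [hchar, hconj, thetaChar_eq, thetaChar_eq]
  calc ((Real.sqrt (2 * a * z.im) / Real.sqrt D : ℝ) : ℂ) *
        (Complex.exp (Real.pi * I * ((((a:ℚ)*(μ + (r:ℚ)/(D:ℚ)) : ℚ)):ℂ)^2 * τ₁ + 2*Real.pi*I*(ν:ℂ)*((((a:ℚ)*(μ + (r:ℚ)/(D:ℚ)) : ℚ)):ℂ)) * jacobiTheta₂ z₁ τ₁) *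
        (Complex.exp (Real.pi * I * ((((μ + (r:ℚ)/(D:ℚ)) : ℚ)):ℂ)^2 * τ₂ + 2*Real.pi*I*(((-(a:ℚ)*ν : ℚ)):ℂ)*((((μ + (r:ℚ)/(D:ℚ)) : ℚ)):ℂ)) * jacobiTheta₂ z₂ τ₂)
      = (((Real.sqrt (2 * a * z.im) / Real.sqrt D : ℝ) : ℂ) *
          Complex.exp (Real.pi * I * ((((a:ℚ)*(μ + (r:ℚ)/(D:ℚ)) : ℚ)):ℂ)^2 * τ₁ + 2*Real.pi*I*(ν:ℂ)*((((a:ℚ)*(μ + (r:ℚ)/(D:ℚ)) : ℚ)):ℂ)) *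
          Complex.exp (Real.pi * I * ((((μ + (r:ℚ)/(D:ℚ)) : ℚ)):ℂ)^2 * τ₂ + 2*Real.pi*I*(((-(a:ℚ)*ν : ℚ)):ℂ)*((((μ + (r:ℚ)/(D:ℚ)) : ℚ)):ℂ))) *
          (jacobiTheta₂ z₁ τ₁ * jacobiTheta₂ z₂ τ₂) := by ring
    _ = (((Real.sqrt (2 * a * z.im) / Real.sqrt D : ℝ) : ℂ) *
          Complex.exp (Real.pi * I * ((((a:ℚ)*(μ + (r:ℚ)/(D:ℚ)) : ℚ)):ℂ)^2 * τ₁ + 2*Real.pi*I*(ν:ℂ)*((((a:ℚ)*(μ + (r:ℚ)/(D:ℚ)) : ℚ)):ℂ)) *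
          Complex.exp (Real.pi * I * ((((μ + (r:ℚ)/(D:ℚ)) : ℚ)):ℂ)^2 * τ₂ + 2*Real.pi*I*(((-(a:ℚ)*ν : ℚ)):ℂ)*((((μ + (r:ℚ)/(D:ℚ)) : ℚ)):ℂ))) *
          ∑' q : ℤ × ℤ, jacobiTheta₂_term q.1 z₁ τ₁ * jacobiTheta₂_term q.2 z₂ τ₂ := by
        rw [show jacobiTheta₂ z₁ τ₁ * jacobiTheta₂ z₂ τ₂
            = ∑' q : ℤ × ℤ, jacobiTheta₂_term q.1 z₁ τ₁ * jacobiTheta₂_term q.2 z₂ τ₂ from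
          tsum_mul_tsum_of_summable_norm hs₁ hs₂]
    _ = (((Real.sqrt (2 * a * z.im) / Real.sqrt D : ℝ) : ℂ) *
          Complex.exp (Real.pi * I * ((((a:ℚ)*(μ + (r:ℚ)/(D:ℚ)) : ℚ)):ℂ)^2 * τ₁ + 2*Real.pi*I*(ν:ℂ)*((((a:ℚ)*(μ + (r:ℚ)/(D:ℚ)) : ℚ)):ℂ)) *
          Complex.exp (Real.pi * I * ((((μ + (r:ℚ)/(D:ℚ)) : ℚ)):ℂ)^2 * τ₂ + 2*Real.pi*I*(((-(a:ℚ)*ν : ℚ)):ℂ)*((((μ + (r:ℚ)/(D:ℚ)) : ℚ)):ℂ))) *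
          ∑' m : ℤ, ∑' k : ℤ, jacobiTheta₂_term (m + a*k) z₁ τ₁ * jacobiTheta₂_term k z₂ τ₂ := by
        congr 1
        rw [← Summable.tsum_prod hFe]
        exact (e.tsum_eq (fun q : ℤ × ℤ => jacobiTheta₂_term q.1 z₁ τ₁ * jacobiTheta₂_term q.2 z₂ τ₂)).symm
    _ = (((Real.sqrt (2 * a * z.im) / Real.sqrt D : ℝ) : ℂ) *
          Complex.exp (Real.pi * I * ((((a:ℚ)*(μ + (r:ℚ)/(D:ℚ)) : ℚ)):ℂ)^2 * τ₁ + 2*Real.pi*I*(ν:ℂ)*((((a:ℚ)*(μ + (r:ℚ)/(D:ℚ)) : ℚ)):ℂ)) *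
          Complex.exp (Real.pi * I * ((((μ + (r:ℚ)/(D:ℚ)) : ℚ)):ℂ)^2 * τ₂ + 2*Real.pi*I*(((-(a:ℚ)*ν : ℚ)):ℂ)*((((μ + (r:ℚ)/(D:ℚ)) : ℚ)):ℂ))) *
          ∑' m : ℤ, Complex.exp (Real.pi*I*(m:ℂ)^2*τ₁ + 2*Real.pi*I*(m:ℂ)*z₁) *
            (1/((2*(a:ℝ)*(D:ℝ)*z.im :ℝ):ℂ)^(1/2 : ℂ) *
              ∑' n : ℤ, Complex.exp (-(Real.pi:ℂ)/(((2*(a:ℝ)*(D:ℝ)*z.im :ℝ)):ℂ) *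
                ((n:ℂ) + I*(I*(m:ℂ)*(D:ℂ)*z - 2*(a:ℂ)*(D:ℂ)*((μ:ℂ) + (r:ℂ)/(D:ℂ))*(z.im:ℂ)))^2)) := by
        congr 1
        refine tsum_congr fun m => ?_
        calc ∑' k : ℤ, jacobiTheta₂_term (m + a*k) z₁ τ₁ * jacobiTheta₂_term k z₂ τ₂
            = ∑' k : ℤ, Complex.exp (Real.pi*I*(m:ℂ)^2*τ₁ + 2*Real.pi*I*(m:ℂ)*z₁) *
                Complex.exp (-(Real.pi:ℂ)*((2*(a:ℝ)*(D:ℝ)*z.im :ℝ):ℂ)*(k:ℂ)^2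
                  + 2*(Real.pi:ℂ)*(I*(m:ℂ)*(D:ℂ)*z - 2*(a:ℂ)*(D:ℂ)*((μ:ℂ) + (r:ℂ)/(D:ℂ))*(z.im:ℂ))*(k:ℂ)) := by
              refine tsum_congr fun k => ?_
              rw [hz₁def, hz₂def, hτ₁def, hτ₂def]
              exact id1 a D r m k μ ν z z.im haC hDC
          _ = Complex.exp (Real.pi*I*(m:ℂ)^2*τ₁ + 2*Real.pi*I*(m:ℂ)*z₁) *
              ∑' k : ℤ, Complex.exp (-(Real.pi:ℂ)*((2*(a:ℝ)*(D:ℝ)*z.im :ℝ):ℂ)*(k:ℂ)^2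
                  + 2*(Real.pi:ℂ)*(I*(m:ℂ)*(D:ℂ)*z - 2*(a:ℂ)*(D:ℂ)*((μ:ℂ) + (r:ℂ)/(D:ℂ))*(z.im:ℂ))*(k:ℂ)) := by
              rw [tsum_mul_left]
          _ = _ := by
              rw [Complex.tsum_exp_neg_quadratic hαre]
    _ = ∑' m : ℤ, ∑' n : ℤ,
          Complex.exp (2*Real.pi*I*(n:ℂ)*(r:ℂ)/(D:ℂ)) * Wf a D μ ν z (m, n) / (D:ℂ) := by
        rw [← tsum_mul_left]
        refine tsum_congr fun m => ?_
        rw [← tsum_mul_left, ← tsum_mul_left, ← tsum_mul_left]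
        refine tsum_congr fun n => ?_
        calc (((Real.sqrt (2 * a * z.im) / Real.sqrt D : ℝ) : ℂ) *
          Complex.exp (Real.pi * I * ((((a:ℚ)*(μ + (r:ℚ)/(D:ℚ)) : ℚ)):ℂ)^2 * τ₁ + 2*Real.pi*I*(ν:ℂ)*((((a:ℚ)*(μ + (r:ℚ)/(D:ℚ)) : ℚ)):ℂ)) *
          Complex.exp (Real.pi * I * ((((μ + (r:ℚ)/(D:ℚ)) : ℚ)):ℂ)^2 * τ₂ + 2*Real.pi*I*(((-(a:ℚ)*ν : ℚ)):ℂ)*((((μ + (r:ℚ)/(D:ℚ)) : ℚ)):ℂ))) *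
          (Complex.exp (Real.pi*I*(m:ℂ)^2*τ₁ + 2*Real.pi*I*(m:ℂ)*z₁) *
            (1/((2*(a:ℝ)*(D:ℝ)*z.im :ℝ):ℂ)^(1/2 : ℂ) *
              Complex.exp (-(Real.pi:ℂ)/(((2*(a:ℝ)*(D:ℝ)*z.im :ℝ)):ℂ) *
                ((n:ℂ) + I*(I*(m:ℂ)*(D:ℂ)*z - 2*(a:ℂ)*(D:ℂ)*((μ:ℂ) + (r:ℂ)/(D:ℂ))*(z.im:ℂ)))^2)))
            = (((Real.sqrt (2*a*z.im) / Real.sqrt D : ℝ) : ℂ) * (1/((2*(a:ℝ)*(D:ℝ)*z.im:ℝ):ℂ)^(1/2 : ℂ))) *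
              (Complex.exp (Real.pi * I * ((((a:ℚ)*(μ + (r:ℚ)/(D:ℚ)) : ℚ)):ℂ)^2 * τ₁ + 2*Real.pi*I*(ν:ℂ)*((((a:ℚ)*(μ + (r:ℚ)/(D:ℚ)) : ℚ)):ℂ)) *
               Complex.exp (Real.pi * I * ((((μ + (r:ℚ)/(D:ℚ)) : ℚ)):ℂ)^2 * τ₂ + 2*Real.pi*I*(((-(a:ℚ)*ν : ℚ)):ℂ)*((((μ + (r:ℚ)/(D:ℚ)) : ℚ)):ℂ)) *
               Complex.exp (Real.pi*I*(m:ℂ)^2*τ₁ + 2*Real.pi*I*(m:ℂ)*z₁) *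
               Complex.exp (-(Real.pi:ℂ)/(((2*(a:ℝ)*(D:ℝ)*z.im :ℝ)):ℂ) *
                ((n:ℂ) + I*(I*(m:ℂ)*(D:ℂ)*z - 2*(a:ℂ)*(D:ℂ)*((μ:ℂ) + (r:ℂ)/(D:ℂ))*(z.im:ℂ)))^2)) := by
              ring
          _ = (1/(D:ℂ)) *
              (Complex.exp (2*Real.pi*I*(n:ℂ)*(r:ℂ)/(D:ℂ)) *
               (Complex.exp (2*Real.pi*I*((m:ℂ)*(ν:ℂ) + (n:ℂ)*(μ:ℂ))) *
                Complex.exp ((Real.pi:ℂ) * ((m:ℂ)*(n:ℂ)*I - (Complex.normSq ((n:ℂ)/(D:ℂ) - (m:ℂ)*z):ℂ)*(D:ℂ)/(2*(z.im:ℂ))) * (1/(a:ℂ))))) := by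
              rw [pref a D ha hD z.im hz, hz₁def, hτ₁def, hτ₂def,
                id2 a D r m n μ ν z z.im haC hDC hyC (hn_prf m n)]
          _ = Complex.exp (2*Real.pi*I*(n:ℂ)*(r:ℂ)/(D:ℂ)) * Wf a D μ ν z (m, n) / (D:ℂ) := by
              rw [Wf]
              ring
    _ = ∑' p : ℤ × ℤ,
          Complex.exp (2*Real.pi*I*(p.2:ℂ)*(r:ℂ)/(D:ℂ)) * Wf a D μ ν z p / (D:ℂ) :=
        (Summable.tsum_prod hV).symm


/-- For `a, D ∈ ℤ_{>0}`, `μ, ν ∈ ℚ` and `z = x + iy` with `y > 0`: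
`∑_{r=0}^{D−1} (√(2ay)/√D) θ[aμ + ar/D; ν](Dz/a) θ[μ + r/D; −aν](−aD·conj z)
  = ∑_{(m,n)} e^{2πi(mν + nDμ)} e^{π(mni − |n−mz|²/(2y))(D/a)}`. -/
theorem factorization_sum_formula (a D : ℕ) (ha : 0 < a) (hD : 0 < D)
    (μ ν : ℚ) (z : ℂ) (hz : 0 < z.im) :
    ∑ r ∈ Finset.range D,
      ((Real.sqrt (2 * a * z.im) / Real.sqrt D : ℝ) : ℂ) *
        thetaChar ((a : ℚ) * μ + (a : ℚ) * (r : ℚ) / (D : ℚ)) ν ((D : ℂ) * z / (a : ℂ)) *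
        thetaChar (μ + (r : ℚ) / (D : ℚ)) (-(a : ℚ) * ν) (-(a : ℂ) * (D : ℂ) * (starRingEnd ℂ) z)
    = ∑' p : ℤ × ℤ,
        Complex.exp (2 * Real.pi * Complex.I *
          ((p.1 : ℂ) * (ν : ℂ) + (p.2 : ℂ) * (D : ℂ) * (μ : ℂ))) *
        Complex.exp ((Real.pi : ℂ) * ((p.1 : ℂ) * (p.2 : ℂ) * Complex.I
          - (Complex.normSq ((p.2 : ℂ) - (p.1 : ℂ) * z) : ℂ) / (2 * (z.im : ℂ)))
          * ((D : ℂ) / (a : ℂ))) := by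
  have hDC : (D:ℂ) ≠ 0 := Nat.cast_ne_zero.mpr hD.ne'
  have hDZ : (D:ℤ) ≠ 0 := by exact_mod_cast hD.ne'
  have hg : Function.Injective (fun q : ℤ × ℤ => ((q.1, (D:ℤ)*q.2) : ℤ × ℤ)) := by
    intro q q' h
    rw [Prod.ext_iff] at h ⊢
    exact ⟨h.1, mul_left_cancel₀ hDZ h.2⟩
  have hsupp : Function.support (fun p : ℤ × ℤ => if (D:ℤ) ∣ p.2 then Wf a D μ ν z p else 0)
      ⊆ Set.range (fun q : ℤ × ℤ => ((q.1, (D:ℤ)*q.2) : ℤ × ℤ)) := by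
    intro p hp
    rw [Function.mem_support] at hp
    by_cases h : (D:ℤ) ∣ p.2
    · obtain ⟨k, hk⟩ := h
      exact ⟨(p.1, k), by rw [Prod.ext_iff]; exact ⟨rfl, hk.symm⟩⟩
    · simp [h] at hp
  calc ∑ r ∈ Finset.range D,
      ((Real.sqrt (2 * a * z.im) / Real.sqrt D : ℝ) : ℂ) *
        thetaChar ((a : ℚ) * μ + (a : ℚ) * (r : ℚ) / (D : ℚ)) ν ((D : ℂ) * z / (a : ℂ)) *
        thetaChar (μ + (r : ℚ) / (D : ℚ)) (-(a : ℚ) * ν) (-(a : ℂ) * (D : ℂ) * (starRingEnd ℂ) z)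
      = ∑ r ∈ Finset.range D, ∑' p : ℤ × ℤ,
          Complex.exp (2*Real.pi*I*(p.2:ℂ)*(r:ℂ)/(D:ℂ)) * Wf a D μ ν z p / (D:ℂ) :=
        Finset.sum_congr rfl fun r _ => step_r a D ha hD μ ν z hz r
    _ = ∑' p : ℤ × ℤ, ∑ r ∈ Finset.range D,
          Complex.exp (2*Real.pi*I*(p.2:ℂ)*(r:ℂ)/(D:ℂ)) * Wf a D μ ν z p / (D:ℂ) :=
        (Summable.tsum_finsetSum fun r _ => summable_V a D μ ν z ha hD hz r).symm
    _ = ∑' p : ℤ × ℤ, (if (D:ℤ) ∣ p.2 then Wf a D μ ν z p else 0) := by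
        refine tsum_congr fun p => ?_
        calc ∑ r ∈ Finset.range D,
            Complex.exp (2*Real.pi*I*(p.2:ℂ)*(r:ℂ)/(D:ℂ)) * Wf a D μ ν z p / (D:ℂ)
            = (∑ r ∈ Finset.range D, Complex.exp (2*Real.pi*I*(p.2:ℂ)*(r:ℂ)/(D:ℂ))) *
                (Wf a D μ ν z p / (D:ℂ)) := by
              simp only [mul_div_assoc]
              rw [← Finset.sum_mul]
          _ = (if (D:ℤ) ∣ p.2 then (D:ℂ) else 0) * (Wf a D μ ν z p / (D:ℂ)) := by
              rw [geom_exp_sum D hD p.2]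
          _ = if (D:ℤ) ∣ p.2 then Wf a D μ ν z p else 0 := by
              split_ifs with h
              · field_simp
              · simp
    _ = ∑' q : ℤ × ℤ, (if (D:ℤ) ∣ ((fun q : ℤ × ℤ => ((q.1, (D:ℤ)*q.2) : ℤ × ℤ)) q).2
          then Wf a D μ ν z (((fun q : ℤ × ℤ => ((q.1, (D:ℤ)*q.2) : ℤ × ℤ)) q)) else 0) :=
        (hg.tsum_eq hsupp).symm
    _ = ∑' p : ℤ × ℤ,
        Complex.exp (2 * Real.pi * Complex.I *
          ((p.1 : ℂ) * (ν : ℂ) + (p.2 : ℂ) * (D : ℂ) * (μ : ℂ))) *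
        Complex.exp ((Real.pi : ℂ) * ((p.1 : ℂ) * (p.2 : ℂ) * Complex.I
          - (Complex.normSq ((p.2 : ℂ) - (p.1 : ℂ) * z) : ℂ) / (2 * (z.im : ℂ)))
          * ((D : ℂ) / (a : ℂ))) := by
        refine tsum_congr fun q => ?_
        rw [if_pos ⟨q.2, rfl⟩, Wf]
        have hDn : (((D:ℤ)*q.2 : ℤ):ℂ)/(D:ℂ) = (q.2:ℂ) := by push_cast; field_simp
        dsimp only
        rw [hDn]
        congr 1
        · congr 1
          push_cast
          ring
        · congr 1
          push_cast
          ring
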